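/- Let A and H be abelian groups and (h, c) an abelian 3-cocycle on A with values in H. If the triples (φ, ψ, k) and (φ', ψ', k') are both admissible relative to (h, c), then so is their product (φ∘φ', ψ∘ψ', k∘(φ'×φ') + ψ∘k'). -/

import Mathlib

namespace BraidedExt

variable {A H : Type*} [AddCommGroup A] [AddCommGroup H]

/-- The differential of a 1-cochain `η : A → H`. -/
def d1 (η : A → H) : A → A → H := fun a b => η b - η (a + b) + η a

/-- The differential of a 2-cochain `k : A² → H`. -/
def d2 (k : A → A → H) : A → A → A → H :=
  fun a b c => k b c - k (a + b) c + k a (b + c) - k a b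

/-- A 1-cochain is normalized if it vanishes at 0. -/
def Normalized1 (η : A → H) : Prop := η 0 = 0

/-- A 2-cochain is normalized if it vanishes whenever any argument is 0. -/
def Normalized2 (k : A → A → H) : Prop := ∀ a : A, k a 0 = 0 ∧ k 0 a = 0

/-- A 3-cochain is normalized if it vanishes whenever any argument is 0. -/
def Normalized3 (h : A → A → A → H) : Prop :=
  ∀ a b : A, h a b 0 = 0 ∧ h a 0 b = 0 ∧ h 0 a b = 0

/-- `h : A³ → H` is a normalized 3-cocycle. -/
def IsCocycle3 (h : A → A → A → H) : Prop :=
  Normalized3 h ∧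
    ∀ a₁ a₂ a₃ a₄ : A,
      h a₂ a₃ a₄ - h (a₁ + a₂) a₃ a₄ + h a₁ (a₂ + a₃) a₄ - h a₁ a₂ (a₃ + a₄) + h a₁ a₂ a₃ = 0

/-- `(h, c)` is an abelian 3-cocycle on `A` with values in `H`. -/
def IsAbelianCocycle (h : A → A → A → H) (c : A → A → H) : Prop :=
  IsCocycle3 h ∧
    (∀ a₁ a₂ b : A,
      c (a₁ + a₂) b = c a₁ b + c a₂ b + h a₁ a₂ b - h a₁ b a₂ + h b a₁ a₂) ∧
    (∀ a b₁ b₂ : A,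
      c a (b₁ + b₂) = c a b₁ + c a b₂ - h a b₁ b₂ + h b₁ a b₂ - h b₁ b₂ a)

/-- The triple `(φ, ψ, k)` is admissible relative to the abelian 3-cocycle `(h, c)`. -/
def Admissible (h : A → A → A → H) (c : A → A → H)
    (φ : A → A) (ψ : H → H) (k : A → A → H) : Prop :=
  Normalized2 k ∧
    (∀ a b c' : A, d2 k a b c' = ψ (h a b c') - h (φ a) (φ b) (φ c')) ∧
    (∀ a b : A, ψ (c a b) + k a b = k b a + c (φ a) (φ b))


/-- **Statement 10.** If the triples `(φ, ψ, k)` and `(φ', ψ', k')` are both admissible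
relative to the abelian 3-cocycle `(h, c)`, then so is their product
`(φ∘φ', ψ∘ψ', k∘(φ'×φ') + ψ∘k')`. -/
theorem admissible_comp {A H : Type*} [AddCommGroup A] [AddCommGroup H]
    (h : A → A → A → H) (c : A → A → H) (habc : IsAbelianCocycle h c)
    (φ φ' : A ≃+ A) (ψ ψ' : H ≃+ H) (k k' : A → A → H)
    (h₁ : Admissible h c φ ψ k) (h₂ : Admissible h c φ' ψ' k') :
    Admissible h c (fun a => φ (φ' a)) (fun x => ψ (ψ' x))
      (fun a b => k (φ' a) (φ' b) + ψ (k' a b)) := by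
  obtain ⟨hn₁, hd₁, hc₁⟩ := h₁
  obtain ⟨hn₂, hd₂, hc₂⟩ := h₂
  refine ⟨?_, ?_, ?_⟩
  · intro a
    constructor
    · simp [(hn₁ _).1, (hn₂ a).1]
    · simp [(hn₁ _).2, (hn₂ a).2]
  · intro a b c'
    have e1 := hd₁ (φ' a) (φ' b) (φ' c')
    have e2 := hd₂ a b c'
    simp only [d2] at e1 e2 ⊢
    have := congrArg ψ e2
    simp only [map_sub, map_add] at this e1 ⊢
    abel_nf
    abel_nf at e1 this
    linear_combination (norm := abel) e1 + this
  · intro a b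
    show ψ (ψ' (c a b)) + (k (φ' a) (φ' b) + ψ (k' a b)) = (k (φ' b) (φ' a) + ψ (k' b a)) + c (φ (φ' a)) (φ (φ' b))
    have e2 := hc₂ a b
    have := congrArg ψ e2
    simp only [map_add] at this
    have e1 := hc₁ (φ' a) (φ' b)
    linear_combination (norm := abel) e1 + this

end BraidedExt
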